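/- Let m ≥ 1 be an integer and v, s real numbers with v > 0 and s > m/2. Let G and K be independent positive real random variables such that G has the Gamma distribution with shape m/2 and rate 2, and K⁻¹ has the Gamma distribution with shape s − m/2 and rate 2v. Then the product K · G is absolutely continuous with density t ↦ ( Γ(s) / ( Γ(s − m/2) · Γ(m/2) · v^{m/2} ) ) · t^{m/2 − 1} · (1 + t/v)^{−s} on (0, ∞). -/

import Mathlib

open MeasureTheory
open scoped ENNReal

section Auxiliary

open Real Set ProbabilityTheory

lemma measurable_gammaPDF' (a r : ℝ) : Measurable (gammaPDF a r) :=
  ENNReal.measurable_ofReal.comp (measurable_gammaPDFReal a r)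

lemma lintegral_scale' {y : ℝ} (hy : 0 < y) {h : ℝ → ℝ≥0∞} (hh : Measurable h) :
    ∫⁻ x, h x = ENNReal.ofReal y * ∫⁻ t, h (y * t) := by
  have hmap : ∫⁻ t, h (y * t) ∂volume = ∫⁻ x, h x ∂(Measure.map (y * ·) volume) :=
    (lintegral_map hh (measurable_const_mul y)).symm
  rw [hmap, Real.map_volume_mul_left hy.ne', lintegral_smul_measure, smul_eq_mul, ← mul_assoc,
    abs_of_pos (inv_pos.mpr hy), ← ENNReal.ofReal_mul hy.le, mul_inv_cancel₀ hy.ne',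
    ENNReal.ofReal_one, one_mul]

lemma gamma_density_eval {a b ra rb : ℝ} (ha : 0 < a) (hb : 0 < b) (hra : 0 < ra)
    (hrb : 0 < rb) {t : ℝ} (ht : 0 < t) :
    ∫⁻ y in Ioi (0:ℝ), gammaPDF b rb y * ENNReal.ofReal y * gammaPDF a ra (y * t)
      = ENNReal.ofReal
          (ra ^ a * rb ^ b / (Gamma a * Gamma b) * Gamma (a + b) * t ^ (a - 1)
            / (ra * t + rb) ^ (a + b)) := by
  have hR : 0 < ra * t + rb := by positivity
  have hΓa := Real.Gamma_pos_of_pos ha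
  have hΓb := Real.Gamma_pos_of_pos hb
  have hΓs := Real.Gamma_pos_of_pos (add_pos ha hb)
  set D : ℝ := ra ^ a * rb ^ b / (Gamma a * Gamma b) * Gamma (a + b) * t ^ (a - 1)
      / (ra * t + rb) ^ (a + b) with hD
  have hDnn : 0 ≤ D := by positivity
  have key : ∀ y ∈ Ioi (0:ℝ),
      gammaPDF b rb y * ENNReal.ofReal y * gammaPDF a ra (y * t)
        = ENNReal.ofReal D * gammaPDF (a + b) (ra * t + rb) y := by
    intro y hy
    have hy0 : (0:ℝ) < y := hy
    have hyt : 0 < y * t := mul_pos hy0 ht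
    rw [gammaPDF_of_nonneg hy0.le, gammaPDF_of_nonneg hyt.le, gammaPDF_of_nonneg hy0.le,
      ← ENNReal.ofReal_mul (by positivity), ← ENNReal.ofReal_mul (by positivity),
      ← ENNReal.ofReal_mul hDnn]
    congr 1
    have hE : exp (-(rb * y)) * exp (-(ra * (y * t))) = exp (-((ra * t + rb) * y)) := by
      rw [← Real.exp_add]; congr 1; ring
    have hmulpow : (y * t) ^ (a - 1) = y ^ (a - 1) * t ^ (a - 1) :=
      Real.mul_rpow hy0.le ht.le
    have hypow : y ^ (b - 1) * y * y ^ (a - 1) = y ^ (a + b - 1) := by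
      rw [show a + b - 1 = (b - 1) + 1 + (a - 1) by ring, Real.rpow_add hy0,
        Real.rpow_add hy0, Real.rpow_one]
    have hPne : (ra * t + rb) ^ (a + b) ≠ 0 := (Real.rpow_pos_of_pos hR _).ne'
    rw [hmulpow, hD, ← hE, ← hypow]
    field_simp
  rw [setLIntegral_congr_fun_ae measurableSet_Ioi (ae_of_all _ key),
    lintegral_const_mul' _ _ ENNReal.ofReal_ne_top]
  have h1 : ∫⁻ y in Ioi (0:ℝ), gammaPDF (a + b) (ra * t + rb) y = 1 := by
    have h1 := lintegral_gammaPDF_eq_one (add_pos ha hb) hR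
    rw [← lintegral_add_compl (gammaPDF (a+b) (ra*t+rb)) measurableSet_Ioi (μ := volume)] at h1
    have h2 : ∫⁻ y in (Ioi (0:ℝ))ᶜ, gammaPDF (a+b) (ra*t+rb) y = 0 := by
      rw [compl_Ioi, setLIntegral_congr (μ := volume) (Iio_ae_eq_Iic (a := (0:ℝ))).symm]
      exact lintegral_gammaPDF_of_nonpos le_rfl
    rwa [h2, add_zero] at h1
  rw [h1, mul_one]

lemma map_div_gamma {a b ra rb : ℝ} (ha : 0 < a) (hb : 0 < b) (hra : 0 < ra) (hrb : 0 < rb) :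
    ((gammaMeasure a ra).prod (gammaMeasure b rb)).map (fun p : ℝ × ℝ => p.1 / p.2) =
      volume.withDensity (fun t =>
        ∫⁻ y in Ioi (0:ℝ), gammaPDF b rb y * ENNReal.ofReal y * gammaPDF a ra (y * t)) := by
  haveI := isProbabilityMeasure_gammaMeasure ha hra
  haveI := isProbabilityMeasure_gammaMeasure hb hrb
  have hq : Measurable fun p : ℝ × ℝ => p.1 / p.2 := measurable_fst.div measurable_snd
  have hfa := measurable_gammaPDF' a ra
  have hfb := measurable_gammaPDF' b rb
  ext S hS
  rw [Measure.map_apply hq hS, Measure.prod_apply_symm (hq hS), withDensity_apply _ hS]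
  conv_lhs => rw [gammaMeasure]
  rw [lintegral_withDensity_eq_lintegral_mul_non_measurable _ hfb
    (ae_of_all _ fun y => ENNReal.ofReal_lt_top)]
  simp only [Pi.mul_apply]
  rw [← lintegral_add_compl _ (measurableSet_Ioi (a := (0:ℝ))) (μ := volume)]
  have hzero : ∫⁻ y in (Ioi (0:ℝ))ᶜ,
      gammaPDF b rb y *
        gammaMeasure a ra ((fun x => (x, y)) ⁻¹' ((fun p : ℝ × ℝ => p.1 / p.2) ⁻¹' S))
        ∂volume = 0 := by
    rw [compl_Ioi, setLIntegral_congr (μ := volume) (Iio_ae_eq_Iic (a := (0:ℝ))).symm]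
    rw [setLIntegral_congr_fun_ae measurableSet_Iio
      (ae_of_all _ (fun y (hy : y < 0) => by rw [gammaPDF_of_neg hy, zero_mul]))]
    simp
  rw [hzero, add_zero]
  have hinner : ∀ y ∈ Ioi (0:ℝ),
      gammaPDF b rb y *
        gammaMeasure a ra ((fun x => (x, y)) ⁻¹' ((fun p : ℝ × ℝ => p.1 / p.2) ⁻¹' S))
      = ∫⁻ t in S, gammaPDF b rb y * ENNReal.ofReal y * gammaPDF a ra (y * t) := by
    intro y hy
    have hy0 : (0:ℝ) < y := hy
    have hpre : ((fun x => (x, y)) ⁻¹' ((fun p : ℝ × ℝ => p.1 / p.2) ⁻¹' S))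
        = (fun x : ℝ => x / y) ⁻¹' S := rfl
    have hA : MeasurableSet ((fun x : ℝ => x / y) ⁻¹' S) := (measurable_id.div_const y) hS
    rw [hpre, gammaMeasure, withDensity_apply _ hA, ← lintegral_indicator hA,
      lintegral_scale' hy0 (hfa.indicator hA)]
    have hind : ∀ t : ℝ, ((fun x : ℝ => x / y) ⁻¹' S).indicator (gammaPDF a ra) (y * t)
        = S.indicator (fun t => gammaPDF a ra (y * t)) t := by
      intro t
      classical
      rw [Set.indicator_apply, Set.indicator_apply, Set.mem_preimage,
        mul_div_cancel_left₀ _ hy0.ne']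
    simp only [hind]
    rw [lintegral_indicator hS, ← mul_assoc,
      ← lintegral_const_mul' _ _ (by
        exact ENNReal.mul_ne_top ENNReal.ofReal_ne_top ENNReal.ofReal_ne_top)]
  rw [setLIntegral_congr_fun_ae measurableSet_Ioi (ae_of_all _ hinner)]
  rw [lintegral_lintegral_swap]
  exact (((hfb.comp measurable_fst).mul
    (ENNReal.measurable_ofReal.comp measurable_fst)).mul
    (hfa.comp (measurable_fst.mul measurable_snd))).aemeasurable

lemma pearson_real_alg {α s v t : ℝ} (hα : 0 < α) (hβ : 0 < s - α) (hv : 0 < v)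
    (ht : 0 < t) :
    2 ^ α * (2 * v) ^ (s - α) / (Gamma α * Gamma (s - α)) * Gamma s * t ^ (α - 1)
        / (2 * t + 2 * v) ^ s
      = Gamma s / (Gamma (s - α) * Gamma α * v ^ α) * t ^ (α - 1) * (1 + t / v) ^ (-s) := by
  have hΓa := Real.Gamma_pos_of_pos hα
  have hΓb := Real.Gamma_pos_of_pos hβ
  have htv : (0:ℝ) < t + v := by positivity
  have hA : (2 * t + 2 * v) ^ s = 2 ^ s * (t + v) ^ s := by
    rw [show 2 * t + 2 * v = 2 * (t + v) by ring, Real.mul_rpow (by norm_num) (by positivity)]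
  have h2s : (2:ℝ) ^ s = 2 ^ α * 2 ^ (s - α) := by
    rw [← Real.rpow_add two_pos]; congr 1; ring
  have h2v : (2 * v) ^ (s - α) = 2 ^ (s - α) * v ^ (s - α) :=
    Real.mul_rpow (by norm_num) hv.le
  have hvs : v ^ s = v ^ α * v ^ (s - α) := by
    rw [← Real.rpow_add hv]; congr 1; ring
  have hone : (1 + t / v) ^ (-s) = v ^ s / (t + v) ^ s := by
    rw [show (1 + t / v) = (t + v) / v by field_simp; ring, Real.rpow_neg (by positivity),
      Real.div_rpow htv.le hv.le, inv_div]
  have h2a : (0:ℝ) < 2 ^ α := Real.rpow_pos_of_pos two_pos α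
  have h2b : (0:ℝ) < 2 ^ (s - α) := Real.rpow_pos_of_pos two_pos (s - α)
  have hva : (0:ℝ) < v ^ α := Real.rpow_pos_of_pos hv α
  have hvb : (0:ℝ) < v ^ (s - α) := Real.rpow_pos_of_pos hv (s - α)
  have hts : (0:ℝ) < (t + v) ^ s := Real.rpow_pos_of_pos htv s
  rw [hA, h2s, h2v, hone, hvs]
  field_simp

end Auxiliary

/-- **Pearson type VII stochastic representation (Table 1 of the paper)**: if `G` and
`K` are independent positive random variables with `G ∼ Gamma(m/2, 2)` and
`K⁻¹ ∼ Gamma(s − m/2, 2v)`, then `K · G` is absolutely continuous with density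
`t ↦ (Γ(s)/(Γ(s−m/2) Γ(m/2) v^{m/2})) · t^{m/2−1} (1 + t/v)^{−s}` on `(0,∞)`. -/
theorem pearsonVII_radial_density
    {Ω : Type*} [MeasurableSpace Ω] (P : Measure Ω) [IsProbabilityMeasure P]
    (m : ℕ) (hm : 1 ≤ m) (v s : ℝ) (hv : 0 < v) (hs : (m : ℝ) / 2 < s)
    (G K : Ω → ℝ) (hG : Measurable G) (hK : Measurable K)
    (hGpos : ∀ ω, 0 < G ω) (hKpos : ∀ ω, 0 < K ω)
    (hindep : ProbabilityTheory.IndepFun G K P)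
    (hGlaw : P.map G = ProbabilityTheory.gammaMeasure ((m : ℝ) / 2) 2)
    (hKlaw : P.map (fun ω => (K ω)⁻¹) =
      ProbabilityTheory.gammaMeasure (s - (m : ℝ) / 2) (2 * v)) :
    P.map (fun ω => K ω * G ω) =
      volume.withDensity (fun t : ℝ =>
        ENNReal.ofReal (if 0 < t then
          Real.Gamma s / (Real.Gamma (s - (m : ℝ) / 2) * Real.Gamma ((m : ℝ) / 2) *
              v ^ ((m : ℝ) / 2)) *
            t ^ ((m : ℝ) / 2 - 1) * (1 + t / v) ^ (-s)
        else 0)) := by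
  have ha : 0 < (m : ℝ) / 2 := by
    have : (1:ℝ) ≤ (m:ℝ) := by exact_mod_cast hm
    linarith
  have hb : 0 < s - (m : ℝ) / 2 := by linarith
  have hrb : 0 < 2 * v := by linarith
  have hindep' : ProbabilityTheory.IndepFun G (fun ω => (K ω)⁻¹) P :=
    hindep.comp measurable_id measurable_inv
  have hpair : P.map (fun ω => (G ω, (K ω)⁻¹)) =
      (ProbabilityTheory.gammaMeasure ((m : ℝ) / 2) 2).prod
        (ProbabilityTheory.gammaMeasure (s - (m : ℝ) / 2) (2 * v)) := by
    rw [(ProbabilityTheory.indepFun_iff_map_prod_eq_prod_map_map hG.aemeasurable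
      (show AEMeasurable (fun ω => (K ω)⁻¹) P from hK.inv.aemeasurable)).mp hindep', hGlaw, hKlaw]
  have hq : Measurable fun p : ℝ × ℝ => p.1 / p.2 := measurable_fst.div measurable_snd
  have hcomp : (fun ω => K ω * G ω)
      = (fun p : ℝ × ℝ => p.1 / p.2) ∘ (fun ω => (G ω, (K ω)⁻¹)) := by
    funext ω
    simp [div_eq_mul_inv, inv_inv, mul_comm]
  rw [hcomp, ← Measure.map_map hq (show Measurable (fun ω => (G ω, (K ω)⁻¹)) from hG.prodMk hK.inv), hpair,
    map_div_gamma ha hb two_pos hrb]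
  apply withDensity_congr_ae
  have h0 : ∀ᵐ t : ℝ ∂volume, t ∉ ({0} : Set ℝ) :=
    compl_mem_ae_iff.mpr Real.volume_singleton
  filter_upwards [h0] with t ht0
  rcases lt_trichotomy t 0 with htneg | htz | htpos
  · rw [if_neg (by linarith), ENNReal.ofReal_zero]
    rw [setLIntegral_congr_fun_ae measurableSet_Ioi (ae_of_all _ (fun y (hy : 0 < y) => by
      rw [ProbabilityTheory.gammaPDF_of_neg (mul_neg_of_pos_of_neg hy htneg), mul_zero]))]
    simp
  · exact absurd htz ht0
  · rw [gamma_density_eval ha hb two_pos hrb htpos, if_pos htpos,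
      show (m : ℝ) / 2 + (s - (m : ℝ) / 2) = s by ring]
    exact congrArg ENNReal.ofReal (pearson_real_alg ha hb hv htpos)
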